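/- The restriction of f_α to X = ∩_{k≥1} ∪_{u∈Σ^k} [κ(u), κ(u) + α^k] is topologically conjugate to the adding machine (Σ^∞, ⊕1), via the conjugacy κ. In particular, κ is a homeomorphism from Σ^∞ (with the metric d(u,v) = max({0} ∪ {1/2^i : u_i ≠ v_i})) onto X. -/

import Mathlib

noncomputable def kinf (α : ℝ) (u : ℕ → Bool) : ℝ :=
  (1 - α) * ∑' i : ℕ, (if u i then α ^ i else 0)

noncomputable def kfin (α : ℝ) {k : ℕ} (u : Fin k → Bool) : ℝ :=
  (1 - α) * ∑ i : Fin k, (if u i then α ^ (i : ℕ) else 0)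

/-- The adding machine on `Σ^∞`. -/
def odo (u : ℕ → Bool) : ℕ → Bool :=
  fun n => if ∀ i < n, u i = true then !u n else u n

noncomputable def fDel (α : ℝ) (x : ℝ) : ℝ :=
  if x = 1 then 0
  else
    let j := sInf {n : ℕ | x < 1 - α ^ n}
    if x ≤ 1 - α ^ (j - 1) + α ^ j then x - 1 + 2 * α ^ (j - 1) - α ^ j
    else (1 - α + α ^ 2) / (2 * α - 1) * (x - 1) + α ^ (j + 1) * (2 - α) / (2 * α - 1)

/-- `X = ∩_{k≥1} ∪_{u∈Σ^k} [κ(u), κ(u)+α^k]`. -/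
def Xinf (α : ℝ) : Set ℝ :=
  ⋂ k ∈ {k : ℕ | 1 ≤ k}, ⋃ u : Fin k → Bool, Set.Icc (kfin α u) (kfin α u + α ^ k)

/-- The metric `d(u,v) = max({0} ∪ {1/2^i : u_i ≠ v_i})` on `Σ^∞` (1-based exponents). -/
noncomputable def dCantor (u v : ℕ → Bool) : ℝ :=
  sSup (insert 0 {r : ℝ | ∃ i : ℕ, u i ≠ v i ∧ r = (1 / 2) ^ (i + 1)})

/-! ### Auxiliary definitions -/

noncomputable def kpart (α : ℝ) (u : ℕ → Bool) (k : ℕ) : ℝ :=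
  (1 - α) * ∑ i ∈ Finset.range k, (if u i then α ^ i else 0)

open Classical in
noncomputable def gs (α x : ℝ) : ℕ → ℝ
  | 0 => 0
  | n+1 => if gs α x n + (1-α) * α^n ≤ x then gs α x n + (1-α) * α^n else gs α x n

open Classical in
noncomputable def gd (α x : ℝ) (n : ℕ) : Bool :=
  if gs α x n + (1-α) * α^n ≤ x then true else false

/-! ### Basic estimates -/

section lems
variable {α : ℝ} (hα1 : 0 < α) (hα2 : α < 1/2)
include hα1 hα2

omit hα1 hα2 in
lemma ha1 (h : α < 1/2) : α < 1 := h.trans (by norm_num)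

omit hα2 in
lemma summand_nonneg (u : ℕ → Bool) (i : ℕ) : (0:ℝ) ≤ (if u i then α ^ i else 0) := by
  split
  · positivity
  · exact le_refl _

omit hα2 in
lemma summand_le (u : ℕ → Bool) (i : ℕ) : (if u i then α ^ i else 0) ≤ α ^ i := by
  split
  · exact le_refl _
  · positivity

lemma summable_aux (u : ℕ → Bool) : Summable (fun i => if u i then α ^ i else 0) :=
  Summable.of_nonneg_of_le (summand_nonneg hα1 u) (summand_le hα1 u)
    (summable_geometric_of_lt_one hα1.le (ha1 hα2))

lemma kinf_split (u : ℕ → Bool) (k : ℕ) :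
    kinf α u = kpart α u k + (1 - α) * ∑' i, (if u (i + k) then α ^ (i + k) else 0) := by
  rw [kinf, kpart, ← mul_add, Summable.sum_add_tsum_nat_add k (summable_aux hα1 hα2 u)]

lemma tail_nonneg (u : ℕ → Bool) (k : ℕ) :
    0 ≤ (1 - α) * ∑' i, (if u (i + k) then α ^ (i + k) else 0) := by
  have h1 : α < 1 := ha1 hα2
  apply mul_nonneg (by linarith)
  exact tsum_nonneg fun i => summand_nonneg hα1 u (i + k)

lemma tail_le (u : ℕ → Bool) (k : ℕ) :
    (1 - α) * ∑' i, (if u (i + k) then α ^ (i + k) else 0) ≤ α ^ k := by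
  have h1 : α < 1 := ha1 hα2
  have hsum : Summable (fun i : ℕ => α ^ (i + k)) := by
    simpa [pow_add] using (summable_geometric_of_lt_one hα1.le h1).mul_right (α ^ k)
  have h2 : ∑' i, (if u (i + k) then α ^ (i + k) else 0) ≤ ∑' i : ℕ, α ^ (i + k) := by
    apply Summable.tsum_le_tsum (fun i => summand_le hα1 u (i + k)) _ hsum
    · exact (summable_aux hα1 hα2 u).comp_injective (add_left_injective k)
  have h3 : ∑' i : ℕ, α ^ (i + k) = (1 - α)⁻¹ * α ^ k := by
    simp only [pow_add]
    rw [tsum_mul_right, tsum_geometric_of_lt_one hα1.le h1]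
  calc (1 - α) * ∑' i, (if u (i + k) then α ^ (i + k) else 0)
      ≤ (1 - α) * ((1 - α)⁻¹ * α ^ k) := by
        apply mul_le_mul_of_nonneg_left _ (by linarith)
        rw [← h3]; exact h2
    _ = α ^ k := by
        rw [← mul_assoc, mul_inv_cancel₀ (by linarith), one_mul]

lemma kinf_lb (u : ℕ → Bool) (k : ℕ) : kpart α u k ≤ kinf α u := by
  rw [kinf_split hα1 hα2 u k]; linarith [tail_nonneg hα1 hα2 u k]

lemma kinf_ub (u : ℕ → Bool) (k : ℕ) : kinf α u ≤ kpart α u k + α ^ k := by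
  rw [kinf_split hα1 hα2 u k]; linarith [tail_le hα1 hα2 u k]

omit hα1 hα2 in
lemma kpart_succ (u : ℕ → Bool) (k : ℕ) :
    kpart α u (k + 1) = kpart α u k + (1 - α) * (if u k then α ^ k else 0) := by
  rw [kpart, kpart, Finset.sum_range_succ, mul_add]

omit hα1 hα2 in
lemma kpart_congr {u v : ℕ → Bool} (k : ℕ) (h : ∀ i < k, u i = v i) :
    kpart α u k = kpart α v k := by
  unfold kpart
  congr 1
  apply Finset.sum_congr rfl
  intro i hi
  rw [h i (Finset.mem_range.mp hi)]

lemma kpart_nonneg (u : ℕ → Bool) (k : ℕ) : 0 ≤ kpart α u k := by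
  have h1 : α < 1 := ha1 hα2
  apply mul_nonneg (by linarith)
  exact Finset.sum_nonneg fun i _ => summand_nonneg hα1 u i

omit hα1 hα2 in
lemma kpart_Ico (u : ℕ → Bool) {m k : ℕ} (h : m ≤ k) :
    kpart α u k = kpart α u m + (1 - α) * ∑ i ∈ Finset.Ico m k, (if u i then α ^ i else 0) := by
  rw [kpart, kpart, ← mul_add]
  congr 1
  rw [Finset.range_eq_Ico, Finset.range_eq_Ico]
  exact (Finset.sum_Ico_consecutive (fun i => if u i then α ^ i else 0) (Nat.zero_le m) h).symm

lemma kpart_ub_of_false (u : ℕ → Bool) {m k : ℕ} (hmk : m < k) (hm : u m = false) :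
    kpart α u k ≤ kpart α u m + (α ^ (m + 1) - α ^ k) := by
  have h1 : α < 1 := ha1 hα2
  have e1 : kpart α u (m+1) = kpart α u m := by
    rw [kpart_succ, hm]; simp
  rw [kpart_Ico u (show m+1 ≤ k from hmk), e1]
  have h2 : ∑ i ∈ Finset.Ico (m+1) k, (if u i then α ^ i else 0)
      ≤ ∑ i ∈ Finset.Ico (m+1) k, α ^ i :=
    Finset.sum_le_sum fun i _ => summand_le hα1 u i
  have h3 : ∑ i ∈ Finset.Ico (m+1) k, α ^ i = (α ^ k - α ^ (m+1)) / (α - 1) :=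
    geom_sum_Ico (by linarith) hmk
  have h4 : (1 - α) * ((α ^ k - α ^ (m+1)) / (α - 1)) = α ^ (m+1) - α ^ k := by
    rw [mul_div_assoc', div_eq_iff (show α - 1 ≠ 0 by linarith)]
    ring
  have h5 : (1 - α) * (∑ i ∈ Finset.Ico (m+1) k, (if u i then α ^ i else 0))
      ≤ α ^ (m+1) - α ^ k := by
    rw [← h4]
    apply mul_le_mul_of_nonneg_left _ (by linarith)
    exact le_of_le_of_eq h2 h3
  linarith

lemma kpart_lb_of_true (u : ℕ → Bool) {m k : ℕ} (hmk : m < k) (hm : u m = true) :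
    kpart α u m + (1 - α) * α ^ m ≤ kpart α u k := by
  have h1 : α < 1 := ha1 hα2
  have e1 : kpart α u (m+1) = kpart α u m + (1 - α) * α ^ m := by
    rw [kpart_succ, hm]; simp
  rw [kpart_Ico u (show m+1 ≤ k from hmk), e1]
  have : 0 ≤ (1 - α) * ∑ i ∈ Finset.Ico (m+1) k, (if u i then α ^ i else 0) := by
    apply mul_nonneg (by linarith)
    exact Finset.sum_nonneg fun i _ => summand_nonneg hα1 u i
  linarith

end lems

section lems2
variable {α : ℝ} (hα1 : 0 < α) (hα2 : α < 1/2)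
include hα1 hα2

lemma kinf_ub_of_false (u : ℕ → Bool) {m : ℕ} (hm : u m = false) :
    kinf α u ≤ kpart α u m + α ^ (m + 1) := by
  have e1 : kpart α u (m+1) = kpart α u m := by rw [kpart_succ, hm]; simp
  have := kinf_ub hα1 hα2 u (m+1)
  rw [e1] at this
  exact this

lemma kinf_lb_of_true (u : ℕ → Bool) {m : ℕ} (hm : u m = true) :
    kpart α u m + (1 - α) * α ^ m ≤ kinf α u := by
  have e1 : kpart α u (m+1) = kpart α u m + (1 - α) * α ^ m := by rw [kpart_succ, hm]; simp
  have := kinf_lb hα1 hα2 u (m+1)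
  rw [e1] at this
  exact this

lemma kinf_sep {u v : ℕ → Bool} {m : ℕ} (hagree : ∀ i < m, u i = v i)
    (hu : u m = false) (hv : v m = true) :
    kinf α u + (1 - 2*α) * α ^ m ≤ kinf α v := by
  have h1 := kinf_ub_of_false hα1 hα2 u hu
  have h2 := kinf_lb_of_true hα1 hα2 v hv
  have h3 : kpart α u m = kpart α v m := kpart_congr m hagree
  have h4 : α ^ (m+1) = α * α ^ m := by ring
  nlinarith [pow_pos hα1 m]

lemma kinf_sep_abs {u v : ℕ → Bool} {m : ℕ} (hagree : ∀ i < m, u i = v i)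
    (hne : u m ≠ v m) : (1 - 2*α) * α ^ m ≤ |kinf α u - kinf α v| := by
  have hp : 0 < (1 - 2*α) * α ^ m := mul_pos (by linarith) (pow_pos hα1 m)
  cases hu : u m <;> cases hv : v m
  · rw [hu, hv] at hne; exact absurd rfl hne
  · have := kinf_sep hα1 hα2 hagree hu hv
    rw [abs_sub_comm, abs_of_nonneg (by linarith)]
    linarith
  · have := kinf_sep hα1 hα2 (fun i hi => (hagree i hi).symm) hv hu
    rw [abs_of_nonneg (by linarith)]
    linarith
  · rw [hu, hv] at hne; exact absurd rfl hne

lemma kinf_close {u v : ℕ → Bool} {k : ℕ} (hagree : ∀ i < k, u i = v i) :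
    |kinf α u - kinf α v| ≤ α ^ k := by
  have h3 : kpart α u k = kpart α v k := kpart_congr k hagree
  have h1 := kinf_lb hα1 hα2 u k
  have h2 := kinf_ub hα1 hα2 u k
  have h4 := kinf_lb hα1 hα2 v k
  have h5 := kinf_ub hα1 hα2 v k
  rw [abs_le]
  constructor <;> linarith

lemma no_mix {u v : ℕ → Bool} {m k : ℕ} {x : ℝ} (hmk : m < k)
    (hagree : ∀ i < m, u i = v i) (hu : u m = false) (hv : v m = true)
    (hxv : kpart α v k ≤ x) (hxu : x ≤ kpart α u k + α ^ k) : False := by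
  have h1 := kpart_ub_of_false hα1 hα2 u hmk hu
  have h2 := kpart_lb_of_true hα1 hα2 v hmk hv
  have h3 : kpart α u m = kpart α v m := kpart_congr m hagree
  have h4 : α ^ (m+1) = α * α ^ m := by ring
  nlinarith [pow_pos hα1 m]

lemma uniq_level {u v : ℕ → Bool} {k : ℕ} {x : ℝ}
    (hu1 : kpart α u k ≤ x) (hu2 : x ≤ kpart α u k + α ^ k)
    (hv1 : kpart α v k ≤ x) (hv2 : x ≤ kpart α v k + α ^ k) :
    ∀ i < k, u i = v i := by
  intro m
  induction m using Nat.strong_induction_on with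
  | _ m ih =>
    intro hmk
    have hagree : ∀ i < m, u i = v i := fun i hi => ih i hi (hi.trans hmk)
    cases hum : u m <;> cases hvm : v m
    · rfl
    · exact (no_mix hα1 hα2 hmk hagree hum hvm hv1 hu2).elim
    · exact (no_mix hα1 hα2 hmk (fun i hi => (hagree i hi).symm) hvm hum hu1 hv2).elim
    · rfl

end lems2

/-! ### Odometer lemmas -/

section lems3
variable {α : ℝ} (hα1 : 0 < α) (hα2 : α < 1/2)

lemma odo_lt {u : ℕ → Bool} {j : ℕ} (hlt : ∀ i < j, u i = true) {i : ℕ} (hij : i < j) :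
    odo u i = false := by
  have hcond : ∀ i' < i, u i' = true := fun i' hi' => hlt i' (hi'.trans hij)
  rw [odo]
  simp only [if_pos hcond, hlt i hij, Bool.not_true]

lemma odo_self {u : ℕ → Bool} {j : ℕ} (hlt : ∀ i < j, u i = true) (hj : u j = false) :
    odo u j = true := by
  rw [odo]
  simp only [if_pos hlt, hj, Bool.not_false]

lemma odo_gt {u : ℕ → Bool} {j : ℕ} (hj : u j = false) {i : ℕ} (hij : j < i) :
    odo u i = u i := by
  rw [odo]
  rw [if_neg]
  intro hcond
  exact absurd (hcond j hij) (by rw [hj]; simp)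

lemma odo_allTrue {u : ℕ → Bool} (h : ∀ i, u i = true) : odo u = fun _ => false := by
  funext n
  rw [odo, if_pos (fun i _ => h i), h n, Bool.not_true]

include hα1 hα2

lemma kpart_all_true {u : ℕ → Bool} {k : ℕ} (h : ∀ i < k, u i = true) :
    kpart α u k = 1 - α ^ k := by
  have h1 : α < 1 := ha1 hα2
  rw [kpart]
  have e1 : ∑ i ∈ Finset.range k, (if u i then α ^ i else 0) = ∑ i ∈ Finset.range k, α ^ i := by
    apply Finset.sum_congr rfl
    intro i hi
    rw [h i (Finset.mem_range.mp hi)]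
    simp
  rw [e1, geom_sum_eq (by linarith)]
  rw [mul_div_assoc', div_eq_iff (show α - 1 ≠ 0 by linarith)]
  ring

lemma kpart_le_one (u : ℕ → Bool) (k : ℕ) : kpart α u k ≤ 1 - α ^ k := by
  have h1 : α < 1 := ha1 hα2
  rw [kpart]
  have e1 : ∑ i ∈ Finset.range k, (if u i then α ^ i else 0) ≤ ∑ i ∈ Finset.range k, α ^ i :=
    Finset.sum_le_sum fun i _ => summand_le hα1 u i
  have e2 : (1-α) * ∑ i ∈ Finset.range k, α ^ i = 1 - α ^ k := by
    rw [geom_sum_eq (by linarith), mul_div_assoc', div_eq_iff (show α - 1 ≠ 0 by linarith)]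
    ring
  nlinarith

omit hα1 hα2 in
lemma fDel_eval {x : ℝ} (hx : x ≠ 1) {j : ℕ}
    (hJ : sInf {n : ℕ | x < 1 - α ^ n} = j + 1)
    (hle : x ≤ 1 - α ^ j + α ^ (j + 1)) :
    fDel α x = x - 1 + 2 * α ^ j - α ^ (j + 1) := by
  unfold fDel
  rw [if_neg hx]
  simp only [hJ, Nat.add_sub_cancel]
  rw [if_pos hle]

end lems3

/-! ### Greedy digit construction -/

section lems4
variable {α : ℝ} (hα1 : 0 < α) (hα2 : α < 1/2)

lemma kpart_gd (x : ℝ) : ∀ k, kpart α (gd α x) k = gs α x k := by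
  intro k
  induction k with
  | zero => simp [kpart, gs]
  | succ k ih =>
    rw [kpart_succ, ih, gs]
    by_cases h : gs α x k + (1-α) * α^k ≤ x
    · rw [if_pos h]
      have : gd α x k = true := by rw [gd, if_pos h]
      rw [this, if_pos rfl]
    · rw [if_neg h]
      have : gd α x k = false := by rw [gd, if_neg h]
      rw [this]
      simp

include hα1 hα2

lemma greedy_inv {x : ℝ}
    (hx : ∀ k, 1 ≤ k → ∃ w : ℕ → Bool, kpart α w k ≤ x ∧ x ≤ kpart α w k + α ^ k) :
    ∀ k, gs α x k ≤ x ∧ x ≤ gs α x k + α ^ k := by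
  have h1 : α < 1 := ha1 hα2
  intro k
  induction k with
  | zero =>
    obtain ⟨w, hw1, hw2⟩ := hx 1 le_rfl
    have := kpart_nonneg hα1 hα2 w 1
    have := kpart_le_one hα1 hα2 w 1
    have hgs0 : gs α x 0 = 0 := rfl
    have e : (α:ℝ) ^ 1 = α := pow_one α
    rw [hgs0, pow_zero]
    constructor <;> linarith
  | succ k ih =>
    obtain ⟨v, hv1, hv2⟩ := hx (k+1) (Nat.le_add_left 1 k)
    set u := gd α x with hu
    have hgk : kpart α u k = gs α x k := kpart_gd x k
    have hvsucc := kpart_succ (α := α) v k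
    have hterm0 : 0 ≤ (1 - α) * (if v k then α ^ k else 0) :=
      mul_nonneg (by linarith) (summand_nonneg hα1 v k)
    have hterm1 : (1 - α) * (if v k then α ^ k else 0) ≤ (1 - α) * α ^ k :=
      mul_le_mul_of_nonneg_left (summand_le hα1 v k) (by linarith)
    have hαk : (1 - α) * α ^ k + α ^ (k+1) = α ^ k := by ring
    have hvk1 : kpart α v k ≤ x := by linarith
    have hvk2 : x ≤ kpart α v k + α ^ k := by linarith
    have hagree : ∀ i < k, u i = v i := by
      apply uniq_level hα1 hα2 (by rw [hgk]; exact ih.1) (by rw [hgk]; exact ih.2) hvk1 hvk2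
    have hkeq : kpart α v k = gs α x k := by rw [← hgk]; exact (kpart_congr k hagree).symm
    by_cases h : gs α x k + (1-α) * α^k ≤ x
    · have e : gs α x (k+1) = gs α x k + (1-α) * α^k := by rw [gs, if_pos h]
      rw [e]
      refine ⟨h, ?_⟩
      linarith
    · have e : gs α x (k+1) = gs α x k := by rw [gs, if_neg h]
      rw [e]
      refine ⟨ih.1, ?_⟩
      cases hvk : v k
      · rw [hvk] at hvsucc
        simp at hvsucc
        linarith
      · rw [hvk] at hvsucc
        simp at hvsucc
        linarith

end lems4

/-! ### `dCantor` and `kfin` lemmas -/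

lemma dC_bdd (u v : ℕ → Bool) :
    BddAbove (insert 0 {r : ℝ | ∃ i : ℕ, u i ≠ v i ∧ r = (1 / 2) ^ (i + 1)}) := by
  refine ⟨1, ?_⟩
  rintro r hr
  rcases Set.mem_insert_iff.mp hr with rfl | ⟨i, hi, rfl⟩
  · norm_num
  · exact pow_le_one₀ (by norm_num) (by norm_num)

lemma dC_lower {u v : ℕ → Bool} {i : ℕ} (h : u i ≠ v i) :
    (1/2 : ℝ) ^ (i + 1) ≤ dCantor u v :=
  le_csSup (dC_bdd u v) (Set.mem_insert_of_mem _ ⟨i, h, by norm_num⟩)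

lemma dC_upper {u v : ℕ → Bool} {c : ℝ} (hc : 0 ≤ c)
    (h : ∀ i, u i ≠ v i → (1/2 : ℝ) ^ (i + 1) ≤ c) : dCantor u v ≤ c := by
  apply csSup_le ⟨0, Set.mem_insert _ _⟩
  rintro r hr
  rcases Set.mem_insert_iff.mp hr with rfl | ⟨i, hi, rfl⟩
  · exact hc
  · exact h i hi

lemma dC_zero {u v : ℕ → Bool} (h : ∀ i, u i = v i) : dCantor u v = 0 := by
  have he : {r : ℝ | ∃ i : ℕ, u i ≠ v i ∧ r = (1 / 2) ^ (i + 1)} = ∅ := by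
    ext r
    simp [h]
  rw [dCantor, he]
  simp

lemma kfin_eq_kpart {α : ℝ} {k : ℕ} (w : Fin k → Bool) :
    kfin α w = kpart α (fun n => if h : n < k then w ⟨n, h⟩ else false) k := by
  rw [kfin, kpart]
  congr 1
  rw [← Fin.sum_univ_eq_sum_range
    (fun n => if (if h : n < k then w ⟨n, h⟩ else false) then α ^ n else 0) k]
  apply Finset.sum_congr rfl
  intro i _
  simp [i.isLt]

lemma kpart_eq_kfin {α : ℝ} (u : ℕ → Bool) (k : ℕ) :
    kpart α u k = kfin α (fun i : Fin k => u i) := by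
  rw [kfin, kpart]
  congr 1
  rw [← Fin.sum_univ_eq_sum_range (fun n => if u n then α ^ n else 0) k]

lemma mem_Xinf_iff {α x : ℝ} :
    x ∈ Xinf α ↔ ∀ k : ℕ, 1 ≤ k →
      ∃ w : Fin k → Bool, kfin α w ≤ x ∧ x ≤ kfin α w + α ^ k := by
  simp [Xinf, Set.mem_iInter, Set.mem_iUnion, Set.mem_Icc]

/-- `f_α` restricted to `X` is topologically conjugate to the adding machine `(Σ^∞, ⊕1)`
via `κ`: `κ` is a bijection of `Σ^∞` onto `X`, intertwines the dynamics, and both `κ`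
and its inverse are continuous (for the metric `dCantor` on `Σ^∞`). -/
theorem stmt6 (α : ℝ) (hα1 : 0 < α) (hα2 : α < 1 / 2) :
    Set.range (kinf α) = Xinf α ∧
    Function.Injective (kinf α) ∧
    (∀ u : ℕ → Bool, fDel α (kinf α u) = kinf α (odo u)) ∧
    (∀ u : ℕ → Bool, ∀ ε > (0 : ℝ), ∃ δ > (0 : ℝ),
      ∀ v : ℕ → Bool, dCantor u v < δ → |kinf α u - kinf α v| < ε) ∧
    (∀ u : ℕ → Bool, ∀ ε > (0 : ℝ), ∃ δ > (0 : ℝ),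
      ∀ v : ℕ → Bool, |kinf α u - kinf α v| < δ → dCantor u v < ε) := by
  have h1 : α < 1 := by linarith
  have h2a : (0:ℝ) < 1 - 2*α := by linarith
  refine ⟨?_, ?_, ?_, ?_, ?_⟩
  · -- range = Xinf
    apply Set.eq_of_subset_of_subset
    · rintro x ⟨u, rfl⟩
      rw [mem_Xinf_iff]
      intro k _
      refine ⟨fun i : Fin k => u i, ?_, ?_⟩
      · rw [← kpart_eq_kfin]; exact kinf_lb hα1 hα2 u k
      · rw [← kpart_eq_kfin]; exact kinf_ub hα1 hα2 u k
    · intro x hx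
      rw [mem_Xinf_iff] at hx
      have hx' : ∀ k, 1 ≤ k → ∃ w : ℕ → Bool, kpart α w k ≤ x ∧ x ≤ kpart α w k + α^k := by
        intro k hk
        obtain ⟨w, hw1, hw2⟩ := hx k hk
        exact ⟨_, by rw [← kfin_eq_kpart]; exact hw1, by rw [← kfin_eq_kpart]; exact hw2⟩
      have hinv := greedy_inv hα1 hα2 hx'
      refine ⟨gd α x, ?_⟩
      by_contra hne
      have habs : ∀ k : ℕ, |kinf α (gd α x) - x| ≤ α ^ k := by
        intro k
        have l1 := kinf_lb hα1 hα2 (gd α x) k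
        have l2 := kinf_ub hα1 hα2 (gd α x) k
        rw [kpart_gd] at l1 l2
        have i1 := (hinv k).1
        have i2 := (hinv k).2
        rw [abs_le]
        constructor <;> linarith
      have hpos : 0 < |kinf α (gd α x) - x| := abs_pos.mpr (sub_ne_zero.mpr hne)
      obtain ⟨k, hk⟩ := exists_pow_lt_of_lt_one hpos h1
      exact absurd (habs k) (not_le.mpr hk)
  · -- injective
    intro u v huv
    by_contra hne
    have hex : ∃ i, u i ≠ v i := by
      by_contra hc
      push_neg at hc
      exact hne (funext hc)
    have hagree : ∀ i < Nat.find hex, u i = v i := fun i hi => by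
      have := Nat.find_min hex hi; simpa using this
    have hs := kinf_sep_abs hα1 hα2 hagree (Nat.find_spec hex)
    rw [huv, sub_self, abs_zero] at hs
    nlinarith [pow_pos hα1 (Nat.find hex)]
  · -- dynamics
    intro u
    by_cases hall : ∀ i, u i = true
    · have hx : kinf α u = 1 := by
        rw [kinf]
        have e : ∑' i : ℕ, (if u i then α ^ i else 0) = ∑' i : ℕ, α ^ i :=
          tsum_congr fun i => by rw [hall i]; simp
        rw [e, tsum_geometric_of_lt_one hα1.le h1, mul_inv_cancel₀ (by linarith)]
      have hz : kinf α (odo u) = 0 := by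
        rw [odo_allTrue hall]
        simp [kinf]
      rw [hx, hz, fDel, if_pos rfl]
    · push_neg at hall
      have hex : ∃ n, u n = false := by
        obtain ⟨n, hn⟩ := hall
        exact ⟨n, by simpa using hn⟩
      set j := Nat.find hex with hjdef
      have hj : u j = false := Nat.find_spec hex
      have hlt : ∀ i < j, u i = true := fun i hi => by
        have := Nat.find_min hex hi; simpa using this
      have hpj : (0:ℝ) < α ^ j := pow_pos hα1 j
      have hA : kpart α u (j+1) = 1 - α ^ j := by
        rw [kpart_succ, hj]
        simp only [Bool.false_eq_true, if_false, mul_zero, add_zero]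
        exact kpart_all_true hα1 hα2 hlt
      set t := (1 - α) * ∑' i, (if u (i + (j+1)) then α ^ (i + (j+1)) else 0) with htdef
      have ht0 : 0 ≤ t := tail_nonneg hα1 hα2 u (j+1)
      have ht1 : t ≤ α ^ (j+1) := tail_le hα1 hα2 u (j+1)
      have hx : kinf α u = 1 - α ^ j + t := by
        rw [kinf_split hα1 hα2 u (j+1), hA]
      have hBzero : kpart α (odo u) j = 0 := by
        rw [kpart]
        have e : ∀ i ∈ Finset.range j, (if odo u i then α ^ i else 0) = 0 := by
          intro i hi
          rw [odo_lt hlt (Finset.mem_range.mp hi)]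
          simp
        rw [Finset.sum_congr rfl e]
        simp
      have hB : kpart α (odo u) (j+1) = (1 - α) * α ^ j := by
        rw [kpart_succ, hBzero, odo_self hlt hj]
        simp
      have htails : ∑' i, (if odo u (i + (j+1)) then α ^ (i + (j+1)) else 0)
          = ∑' i, (if u (i + (j+1)) then α ^ (i + (j+1)) else 0) :=
        tsum_congr fun i => by rw [odo_gt hj (by omega)]
      have hy : kinf α (odo u) = (1 - α) * α ^ j + t := by
        rw [kinf_split hα1 hα2 (odo u) (j+1), hB, htdef, htails]
      have hpow : α ^ (j+1) = α * α ^ j := by ring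
      have hne1 : kinf α u ≠ 1 := by
        apply ne_of_lt
        rw [hx]
        nlinarith
      have hmem : kinf α u < 1 - α ^ (j+1) := by
        rw [hx]
        nlinarith
      have hJ : sInf {n : ℕ | kinf α u < 1 - α ^ n} = j + 1 := by
        apply le_antisymm
        · exact Nat.sInf_le hmem
        · apply le_csInf ⟨j+1, hmem⟩
          intro n hn
          simp only [Set.mem_setOf_eq] at hn
          by_contra hc
          push_neg at hc
          have hnj : n ≤ j := by omega
          have hpp : α ^ j ≤ α ^ n := pow_le_pow_of_le_one hα1.le h1.le hnj
          rw [hx] at hn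
          linarith
      have hle : kinf α u ≤ 1 - α ^ j + α ^ (j+1) := by rw [hx]; linarith
      rw [fDel_eval hne1 hJ hle, hx, hy]
      ring
  · -- uniform continuity of κ
    intro u ε hε
    obtain ⟨k, hk⟩ := exists_pow_lt_of_lt_one hε h1
    refine ⟨(1/2 : ℝ)^k, by positivity, ?_⟩
    intro v hd
    have hagree : ∀ i < k, u i = v i := by
      by_contra hc
      push_neg at hc
      obtain ⟨i, hik, hiv⟩ := hc
      have l1 := dC_lower hiv
      have l2 : (1/2:ℝ)^k ≤ (1/2:ℝ)^(i+1) :=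
        pow_le_pow_of_le_one (by norm_num) (by norm_num) hik
      linarith
    calc |kinf α u - kinf α v| ≤ α^k := kinf_close hα1 hα2 hagree
      _ < ε := hk
  · -- continuity of κ⁻¹
    intro u ε hε
    obtain ⟨N, hN⟩ := exists_pow_lt_of_lt_one hε (show (1/2:ℝ) < 1 by norm_num)
    refine ⟨(1 - 2*α) * α^N, mul_pos h2a (pow_pos hα1 N), ?_⟩
    intro v hd
    by_cases hex : ∃ i, u i ≠ v i
    · have hm := Nat.find_spec hex
      have hagree : ∀ i < Nat.find hex, u i = v i := fun i hi => by
        have := Nat.find_min hex hi; simpa using this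
      have hsep := kinf_sep_abs hα1 hα2 hagree hm
      have hlt : α ^ (Nat.find hex) < α ^ N :=
        lt_of_mul_lt_mul_left (lt_of_le_of_lt hsep hd) (le_of_lt h2a)
      have hNm : N < Nat.find hex := (pow_lt_pow_iff_right_of_lt_one₀ hα1 h1).mp hlt
      have hub : dCantor u v ≤ (1/2:ℝ)^(N+1) := by
        apply dC_upper (by positivity)
        intro i hi
        have him : Nat.find hex ≤ i := Nat.find_min' hex hi
        exact pow_le_pow_of_le_one (by norm_num) (by norm_num) (by omega)
      have hNN : (1/2:ℝ)^(N+1) ≤ (1/2:ℝ)^N :=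
        pow_le_pow_of_le_one (by norm_num) (by norm_num) (Nat.le_succ N)
      linarith
    · push_neg at hex
      rw [dC_zero hex]
      exact hε
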